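/- Let D be a 2-connected rooted digraph containing no bipath of length 4, in which every vertex has indegree at most d. Then the number of non-special vertices of D is at most 3d times the number of special vertices of D. -/

import Mathlib

variable {V : Type*}

/-- Reachability by directed paths in a digraph given by its arc relation. -/
def Reaches (A : V → V → Prop) : V → V → Prop :=
  Relation.ReflTransGen A

/-- Reachability by directed paths avoiding the vertex set `S` (i.e. in `D − S`). -/
def ReachesAvoiding (A : V → V → Prop) (S : Set V) : V → V → Prop :=
  Relation.ReflTransGen (fun u v => A u v ∧ u ∉ S ∧ v ∉ S)

/-- A rooted digraph: loopless, the distinguished root `r` has indegree 0 and at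
least two outneighbours, and there is no arc `(x, y)` with `x ≠ r` and `y` an
outneighbour of `r`. -/
def IsRootedDigraph (A : V → V → Prop) (r : V) : Prop :=
  (∀ v, ¬ A v v) ∧
  (∀ v, ¬ A v r) ∧
  (∃ u v, u ≠ v ∧ A r u ∧ A r v) ∧
  ∀ x y, x ≠ r → A r y → ¬ A x y

/-- A rooted digraph is connected if every vertex is reachable from the root. -/
def RConnected (A : V → V → Prop) (r : V) : Prop :=
  ∀ v, Reaches A r v

/-- `S` is a cut of the rooted digraph: `S ⊆ V − r` and some vertex outside `S`
is the endpoint of no directed path from `r` in `D − S`. -/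
def IsCut (A : V → V → Prop) (r : V) (S : Set V) : Prop :=
  r ∉ S ∧ ∃ z ∉ S, ¬ ReachesAvoiding A S r z

/-- A rooted digraph is 2-connected if it has no cut of size at most 1. -/
def TwoConnected (A : V → V → Prop) (r : V) : Prop :=
  ∀ S : Set V, S.ncard ≤ 1 → ¬ IsCut A r S

/-- `T` is an outbranching of the rooted digraph `(A, r)`: a spanning directed
tree rooted at `r` (every vertex other than `r` has a unique in-arc in `T`, the
root has none, and every vertex is reachable from `r` in `T`). -/
def IsOutbranching (A : V → V → Prop) (r : V) (T : V → V → Prop) : Prop :=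
  (∀ u v, T u v → A u v) ∧
  (∀ v, v ≠ r → ∃! u, T u v) ∧
  (∀ u, ¬ T u r) ∧
  ∀ v, Reaches T r v

/-- The number of leaves (vertices of outdegree 0) of an outbranching `T`. -/
noncomputable def leafCount (T : V → V → Prop) : ℕ :=
  {v | ∀ u, ¬ T v u}.ncard

/-- The maximum number of leaves over all outbranchings. -/
noncomputable def maxleaf (A : V → V → Prop) (r : V) : ℕ :=
  sSup {n | ∃ T : V → V → Prop, IsOutbranching A r T ∧ n = leafCount T}

/-- Indegree of a vertex. -/
noncomputable def indeg (A : V → V → Prop) (v : V) : ℕ := {u | A u v}.ncard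

/-- Outdegree of a vertex. -/
noncomputable def outdeg (A : V → V → Prop) (v : V) : ℕ := {u | A v u}.ncard

/-- A vertex is nice if it has a simple in-arc, i.e. an in-arc not belonging to
a 2-circuit. -/
def Nice (A : V → V → Prop) (v : V) : Prop := ∃ u, A u v ∧ ¬ A v u

/-- A vertex is special if it has indegree at least 3 or a simple in-arc. -/
def Special (A : V → V → Prop) (v : V) : Prop := 3 ≤ indeg A v ∨ Nice A v

/-- A non-special vertex: distinct from `r`, with exactly two in-neighbours,
both of which are also its outneighbours. -/
def NonSpecial (A : V → V → Prop) (r : V) (v : V) : Prop :=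
  v ≠ r ∧ ∃ a b, a ≠ b ∧ {u | A u v} = {a, b} ∧ A v a ∧ A v b

/-- `x 0, …, x 4` is a bipath of length 4: the arcs of `D` incident to the
internal vertices `x 1, x 2, x 3` are exactly the arcs `(x i, x (i+1))` and
`(x (i+1), x i)` of the bipath. -/
def IsBipath4 (A : V → V → Prop) (x : Fin 5 → V) : Prop :=
  Function.Injective x ∧
  ∀ i : Fin 5, 0 < (i : ℕ) → (i : ℕ) < 4 →
    (∀ v, A (x i) v ↔ v = x (i - 1) ∨ v = x (i + 1)) ∧
    (∀ v, A v (x i) ↔ v = x (i - 1) ∨ v = x (i + 1))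

/-- A digraph is acyclic if it has no directed cycle. -/
def Acyclic (A : V → V → Prop) : Prop :=
  ∀ u v, A u v → ¬ Reaches A v u


/-- A vertex having an out-arc to a special vertex. -/
def TypeAux (A : V → V → Prop) (v : V) : Prop := ∃ s, A v s ∧ Special A s

lemma closed_unreach (A : V → V → Prop) (r : V) (S C : Set V)
    (hC : ∀ x ∈ C, ∀ u, A u x → u ∈ C ∪ S) (hr : r ∉ C) {v : V} (hv : v ∈ C) :
    ¬ ReachesAvoiding A S r v := by
  intro h
  have key : ∀ w, ReachesAvoiding A S r w → w ∉ C := by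
    intro w hw
    induction hw with
    | refl => exact hr
    | tail hab hbc ih =>
      intro hcC
      rcases hC _ hcC _ hbc.1 with h' | h'
      · exact ih h'
      · exact hbc.2.1 h'
  exact key v h hv

lemma three_le_ncard [Fintype V] {s : Set V} {a b c : V}
    (hab : a ≠ b) (hac : a ≠ c) (hbc : b ≠ c)
    (ha : a ∈ s) (hb : b ∈ s) (hc : c ∈ s) : 3 ≤ s.ncard := by
  have h1 : ({a, b, c} : Set V).ncard = 3 := Set.ncard_eq_three.mpr ⟨a, b, c, hab, hac, hbc, rfl⟩
  have h2 : ({a, b, c} : Set V) ⊆ s := by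
    intro x hx; rcases hx with rfl | rfl | rfl <;> assumption
  calc 3 = ({a, b, c} : Set V).ncard := h1.symm
    _ ≤ s.ncard := Set.ncard_le_ncard h2 (Set.toFinite s)

lemma inj5 {α : Type*} {x0 x1 x2 x3 x4 : α} (h01 : x0 ≠ x1) (h02 : x0 ≠ x2) (h03 : x0 ≠ x3)
    (h04 : x0 ≠ x4) (h12 : x1 ≠ x2) (h13 : x1 ≠ x3) (h14 : x1 ≠ x4) (h23 : x2 ≠ x3)
    (h24 : x2 ≠ x4) (h34 : x3 ≠ x4) : Function.Injective ![x0, x1, x2, x3, x4] := by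
  intro i j h
  fin_cases i <;> fin_cases j <;> simp_all

lemma key_struct [Fintype V] (A : V → V → Prop) (r : V)
    (hD : IsRootedDigraph A r) (h2 : TwoConnected A r)
    (hnobp : ¬ ∃ x : Fin 5 → V, IsBipath4 A x)
    (v : V) (hv : NonSpecial A r v) (hnt : ¬ TypeAux A v) :
    ∃ a, A a v ∧ A v a ∧ TypeAux A a := by
  classical
  obtain ⟨hvr, a, b, hab, hin, hva, hvb⟩ := hv
  obtain ⟨hloop, hnoR, -, -⟩ := hD
  have hAav : A a v := by
    have : a ∈ {u | A u v} := by rw [hin]; exact Or.inl rfl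
    exact this
  have hAbv : A b v := by
    have : b ∈ {u | A u v} := by rw [hin]; exact Or.inr rfl
    exact this
  have claim : ∀ x, A v x → A x v → ¬ TypeAux A x →
      ∃ x', x' ≠ v ∧ x' ≠ r ∧ ¬ Special A x' ∧ A x' x ∧ A x x' ∧
        (∀ w, (A x w ↔ (w = v ∨ w = x')) ∧ (A w x ↔ (w = v ∨ w = x'))) := by
    intro x hvx hxv htx
    have hnsx : ¬ Special A x := fun hs => hnt ⟨x, hvx, hs⟩
    have hxdeg : indeg A x ≤ 2 := by
      rcases not_or.mp hnsx with ⟨h3, _⟩; omega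
    have hnice : ∀ u, A u x → A x u := by
      intro u hu
      by_contra h
      exact (not_or.mp hnsx).2 ⟨u, hu, h⟩
    have hout : ∀ w, A x w → A w x := by
      intro w hw
      by_contra h
      exact htx ⟨w, hw, Or.inr ⟨x, hw, h⟩⟩
    have hxr : x ≠ r := fun h => hnoR v (h ▸ hvx)
    have hxv' : x ≠ v := fun h => hloop v (h ▸ hxv)
    by_cases hsub : ∀ u, A u x → u = v
    · exfalso
      have hcut : IsCut A r {v} := by
        refine ⟨by simp [Ne.symm hvr], x, by simp [hxv'], ?_⟩
        refine closed_unreach A r {v} {x} ?_ (by simp [Ne.symm hxr]) rfl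
        intro y hy u hu
        rcases hy with rfl
        exact Or.inr (by simp [hsub u hu])
      exact h2 {v} (by simp) hcut
    · push_neg at hsub
      obtain ⟨x', hx'x, hx'v⟩ := hsub
      have hAxx' : A x x' := hnice x' hx'x
      have hx'r : x' ≠ r := fun h => hnoR x (h ▸ hAxx')
      have hnsx' : ¬ Special A x' := fun hs => htx ⟨x', hAxx', hs⟩
      have hinx : {u | A u x} = {v, x'} := by
        apply Set.Subset.antisymm
        · intro u hu
          by_contra hnot
          simp only [Set.mem_insert_iff, Set.mem_singleton_iff, not_or] at hnot
          have h3 : (3:ℕ) ≤ indeg A x :=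
            three_le_ncard (Ne.symm hx'v) (Ne.symm hnot.1) (Ne.symm hnot.2) hvx hx'x hu
          omega
        · rintro u (rfl | rfl)
          · exact hvx
          · exact hx'x
      refine ⟨x', hx'v, hx'r, hnsx', hx'x, hAxx', ?_⟩
      intro w
      constructor
      · constructor
        · intro h
          have hw : w ∈ {u | A u x} := hout w h
          rw [hinx] at hw
          simpa using hw
        · rintro (rfl | rfl)
          · exact hxv
          · exact hAxx'
      · constructor
        · intro h
          have hw : w ∈ {u | A u x} := h
          rw [hinx] at hw
          simpa using hw
        · rintro (rfl | rfl)
          · exact hvx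
          · exact hx'x
  by_cases hta : TypeAux A a
  · exact ⟨a, hAav, hva, hta⟩
  by_cases htb : TypeAux A b
  · exact ⟨b, hAbv, hvb, htb⟩
  exfalso
  obtain ⟨a', ha'v, ha'r, hnsa', ha'a, haa', hiffa⟩ := claim a hva hAav hta
  obtain ⟨b', hb'v, hb'r, hnsb', hb'b, hbb', hiffb⟩ := claim b hvb hAbv htb
  have har : a ≠ r := fun h => hnoR v (h ▸ hva)
  have hbr : b ≠ r := fun h => hnoR v (h ▸ hvb)
  have hav : a ≠ v := fun h => hloop v (h ▸ hAav)
  have hbv : b ≠ v := fun h => hloop v (h ▸ hAbv)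
  have hvin : ∀ w, A w v ↔ (w = a ∨ w = b) := by
    intro w
    constructor
    · intro h
      have hw : w ∈ {u | A u v} := h
      rw [hin] at hw
      simpa using hw
    · rintro (rfl | rfl)
      · exact hAav
      · exact hAbv
  have hvout : ∀ w, A v w ↔ (w = a ∨ w = b) := by
    intro w
    constructor
    · intro h
      have hwv : A w v := by
        by_contra h2'
        exact hnt ⟨w, h, Or.inr ⟨v, h, h2'⟩⟩
      exact (hvin w).mp hwv
    · rintro (rfl | rfl)
      · exact hva
      · exact hvb
  have hconn : ∀ z, ReachesAvoiding A (∅ : Set V) r z := by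
    by_contra hc
    push_neg at hc
    obtain ⟨z, hz⟩ := hc
    exact h2 ∅ (by simp) ⟨by simp, z, by simp, hz⟩
  have closed_contra : ∀ C : Set V, v ∈ C → r ∉ C →
      (∀ x ∈ C, ∀ u, A u x → u ∈ C) → False := by
    intro C hvC hrC hcl
    exact closed_unreach A r ∅ C (fun x hx u hu => Or.inl (hcl x hx u hu)) hrC hvC (hconn v)
  by_cases hba : A b a
  · have ha'b : a' = b := by
      rcases (hiffa b).2.mp hba with h | h
      · exact absurd h hbv
      · exact h.symm
    have hb'a : b' = a := by
      have hA_ab : A a b := by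
        have := haa'; rw [ha'b] at this; exact this
      rcases (hiffb a).2.mp hA_ab with h | h
      · exact absurd h hav
      · exact h.symm
    refine closed_contra {v, a, b} (by simp) ?_ ?_
    · simp only [Set.mem_insert_iff, Set.mem_singleton_iff, not_or]
      exact ⟨Ne.symm hvr, Ne.symm har, Ne.symm hbr⟩
    · intro x hx u hu
      rcases hx with rfl | rfl | rfl
      · rcases (hvin u).mp hu with rfl | rfl <;> simp
      · rcases (hiffa u).2.mp hu with rfl | rfl
        · simp
        · rw [ha'b]; simp
      · rcases (hiffb u).2.mp hu with rfl | rfl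
        · simp
        · rw [hb'a]; simp
  · have ha'b : a' ≠ b := fun h => hba (h ▸ ha'a)
    have hb'a : b' ≠ a := fun h => hba (h ▸ hbb')
    by_cases ha'b' : a' = b'
    · have hAba' : A b a' := by rw [ha'b']; exact hbb'
      have ha'deg : indeg A a' ≤ 2 := by
        rcases not_or.mp hnsa' with ⟨h3, _⟩; omega
      have hina' : ∀ u, A u a' → u = a ∨ u = b := by
        intro u hu
        by_contra hc
        push_neg at hc
        have h3 : (3:ℕ) ≤ indeg A a' :=
          three_le_ncard hab (Ne.symm hc.1) (Ne.symm hc.2) haa' hAba' hu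
        omega
      refine closed_contra {v, a, b, a'} (by simp) ?_ ?_
      · simp only [Set.mem_insert_iff, Set.mem_singleton_iff, not_or]
        exact ⟨Ne.symm hvr, Ne.symm har, Ne.symm hbr, Ne.symm ha'r⟩
      · intro x hx u hu
        rcases hx with rfl | rfl | rfl | rfl
        · rcases (hvin u).mp hu with rfl | rfl <;> simp
        · rcases (hiffa u).2.mp hu with rfl | rfl <;> simp
        · rcases (hiffb u).2.mp hu with rfl | rfl
          · simp
          · rw [← ha'b']; simp
        · rcases hina' u hu with rfl | rfl <;> simp
    · apply hnobp
      have l1 : a' ≠ a := fun h => hloop a (h ▸ ha'a)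
      have l2 : b' ≠ b := fun h => hloop b (h ▸ hb'b)
      refine ⟨![a', a, v, b, b'], ?_, ?_⟩
      · exact inj5 l1 ha'v ha'b ha'b' hav hab (Ne.symm hb'a) (Ne.symm hbv)
          (Ne.symm hb'v) (Ne.symm l2)
      · intro i h0 h4
        have hi : i = 1 ∨ i = 2 ∨ i = 3 := by
          have h5 : (i : ℕ) = 1 ∨ (i : ℕ) = 2 ∨ (i : ℕ) = 3 := by omega
          rcases h5 with h | h | h
          · exact Or.inl (Fin.ext (by rw [h]; rfl))
          · exact Or.inr (Or.inl (Fin.ext (by rw [h]; rfl)))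
          · exact Or.inr (Or.inr (Fin.ext (by rw [h]; rfl)))
        rcases hi with rfl | rfl | rfl
        · show (∀ w, A a w ↔ w = a' ∨ w = v) ∧ (∀ w, A w a ↔ w = a' ∨ w = v)
          exact ⟨fun w => ((hiffa w).1).trans or_comm, fun w => ((hiffa w).2).trans or_comm⟩
        · show (∀ w, A v w ↔ w = a ∨ w = b) ∧ (∀ w, A w v ↔ w = a ∨ w = b)
          exact ⟨hvout, hvin⟩
        · show (∀ w, A b w ↔ w = v ∨ w = b') ∧ (∀ w, A w b ↔ w = v ∨ w = b')
          exact ⟨fun w => (hiffb w).1, fun w => (hiffb w).2⟩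

/-- In a 2-connected rooted digraph with no bipath of length 4
and all indegrees at most `d`, the number of non-special vertices is at most
`3d` times the number of special vertices. -/
theorem nonspecial_bound [Fintype V] (A : V → V → Prop) (r : V) (d : ℕ)
    (hD : IsRootedDigraph A r) (h2 : TwoConnected A r)
    (hnobp : ¬ ∃ x : Fin 5 → V, IsBipath4 A x)
    (hdeg : ∀ v, indeg A v ≤ d) :
    {v | NonSpecial A r v}.ncard ≤ 3 * d * {v | Special A v}.ncard := by
  classical
  have hsel1 : ∀ v : V, ∃ s : V, TypeAux A v → (A v s ∧ Special A s) := by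
    intro v
    by_cases h : TypeAux A v
    · obtain ⟨s, hs⟩ := h
      exact ⟨s, fun _ => hs⟩
    · exact ⟨v, fun h' => absurd h' h⟩
  choose sA hsA using hsel1
  have hsel2 : ∀ v : V, ∃ a : V,
      (NonSpecial A r v ∧ ¬ TypeAux A v) → (A a v ∧ A v a ∧ TypeAux A a) := by
    intro v
    by_cases h : NonSpecial A r v ∧ ¬ TypeAux A v
    · obtain ⟨a, ha⟩ := key_struct A r hD h2 hnobp v h.1 h.2
      exact ⟨a, fun _ => ha⟩
    · exact ⟨v, fun h' => absurd h' h⟩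
  choose aN haN using hsel2
  set e := Fintype.equivFin V with he
  set g : V → V × V × Fin 3 := fun v =>
    if TypeAux A v then (v, sA v, 0)
    else (aN v, sA (aN v), if ∀ u, A u (aN v) → e v ≤ e u then 1 else 2) with hg
  set T : Set (V × V × Fin 3) := {p | A p.1 p.2.1 ∧ Special A p.2.1} with hT
  have hkey : ∀ v, NonSpecial A r v → ¬ TypeAux A v →
      A (aN v) v ∧ A v (aN v) ∧ TypeAux A (aN v) := fun v h1 h2' => haN v ⟨h1, h2'⟩
  have hmaps : ∀ v ∈ {v | NonSpecial A r v}, g v ∈ T := by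
    intro v hv
    by_cases h : TypeAux A v
    · have hs := hsA v h
      simp only [hg, if_pos h, hT, Set.mem_setOf_eq]
      exact ⟨hs.1, hs.2⟩
    · have h3 := hkey v hv h
      have hs := hsA (aN v) h3.2.2
      simp only [hg, if_neg h, hT, Set.mem_setOf_eq]
      exact ⟨hs.1, hs.2⟩
  have hinj : Set.InjOn g {v | NonSpecial A r v} := by
    intro v hv w hw hgvw
    by_cases h1 : TypeAux A v <;> by_cases h2' : TypeAux A w
    · simp only [hg, if_pos h1, if_pos h2', Prod.mk.injEq] at hgvw
      exact hgvw.1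
    · exfalso
      simp only [hg, if_pos h1, if_neg h2', Prod.mk.injEq] at hgvw
      have h3 := hgvw.2.2
      split_ifs at h3 <;> exact absurd h3 (by decide)
    · exfalso
      simp only [hg, if_neg h1, if_pos h2', Prod.mk.injEq] at hgvw
      have h3 := hgvw.2.2
      split_ifs at h3 <;> exact absurd h3 (by decide)
    · simp only [hg, if_neg h1, if_neg h2', Prod.mk.injEq] at hgvw
      have ha : aN v = aN w := hgvw.1
      have hslot := hgvw.2.2
      rw [← ha] at hslot
      have hAva : A v (aN v) := (hkey v hv h1).2.1
      have hAwa : A w (aN v) := by rw [ha]; exact (hkey w hw h2').2.1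
      have hnsa : ¬ Special A (aN v) := fun hs => h1 ⟨aN v, hAva, hs⟩
      have hadeg : indeg A (aN v) ≤ 2 := by
        rcases not_or.mp hnsa with ⟨h3, _⟩; omega
      by_cases hc1 : ∀ u, A u (aN v) → e v ≤ e u <;>
        by_cases hc2 : ∀ u, A u (aN v) → e w ≤ e u
      · exact e.injective (le_antisymm (hc1 w hAwa) (hc2 v hAva))
      · rw [if_pos hc1, if_neg hc2] at hslot
        exact absurd hslot (by decide)
      · rw [if_neg hc1, if_pos hc2] at hslot
        exact absurd hslot (by decide)
      · push_neg at hc1 hc2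
        obtain ⟨u1, hu1, hlt1⟩ := hc1
        obtain ⟨u2, hu2, hlt2⟩ := hc2
        by_contra hvw
        have hu1v : u1 ≠ v := fun h => absurd (h ▸ hlt1) (lt_irrefl _)
        have hu2w : u2 ≠ w := fun h => absurd (h ▸ hlt2) (lt_irrefl _)
        have hu1w : u1 = w := by
          by_contra hne
          have h3 : (3:ℕ) ≤ indeg A (aN v) :=
            three_le_ncard (show v ≠ w from hvw) (Ne.symm hu1v) (Ne.symm hne) hAva hAwa hu1
          omega
        have hu2v : u2 = v := by
          by_contra hne
          have h3 : (3:ℕ) ≤ indeg A (aN v) :=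
            three_le_ncard (show w ≠ v from Ne.symm hvw) (Ne.symm hu2w) (Ne.symm hne)
              hAwa hAva hu2
          omega
        subst hu1w
        subst hu2v
        exact lt_asymm hlt1 hlt2
  have hNT : {v | NonSpecial A r v}.ncard ≤ T.ncard :=
    Set.ncard_le_ncard_of_injOn g hmaps hinj (Set.toFinite T)
  -- Now bound `T.ncard`.
  have hTf : T.ncard =
      (Finset.univ.filter (fun p : V × V × Fin 3 => A p.1 p.2.1 ∧ Special A p.2.1)).card := by
    rw [hT, Set.ncard_eq_toFinset_card']
    congr 1
    ext p
    simp
  have hSpf : {v | Special A v}.ncard = (Finset.univ.filter (fun s => Special A s)).card := by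
    rw [Set.ncard_eq_toFinset_card']
    congr 1
    ext s
    simp
  have hindegf : ∀ s : V, (Finset.univ.filter (fun u => A u s)).card = indeg A s := by
    intro s
    rw [indeg, Set.ncard_eq_toFinset_card']
    congr 1
    ext u
    simp
  have hsub : (Finset.univ.filter (fun p : V × V × Fin 3 => A p.1 p.2.1 ∧ Special A p.2.1)) ⊆
      (Finset.univ.filter (fun s => Special A s)).biUnion
        (fun s => Finset.univ.filter (fun p : V × V × Fin 3 => A p.1 s ∧ p.2.1 = s)) := by
    intro p hp
    simp only [Finset.mem_filter, Finset.mem_univ, true_and] at hp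
    simp only [Finset.mem_biUnion, Finset.mem_filter, Finset.mem_univ, true_and]
    exact ⟨p.2.1, hp.2, hp.1, rfl⟩
  have hcardeach : ∀ s ∈ (Finset.univ.filter (fun s => Special A s)),
      (Finset.univ.filter (fun p : V × V × Fin 3 => A p.1 s ∧ p.2.1 = s)).card ≤ 3 * d := by
    intro s _
    have step : (Finset.univ.filter (fun p : V × V × Fin 3 => A p.1 s ∧ p.2.1 = s)).card ≤
        ((Finset.univ.filter (fun u => A u s)) ×ˢ (Finset.univ : Finset (Fin 3))).card := by
      apply Finset.card_le_card_of_injOn (fun p => (p.1, p.2.2))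
      · intro p hp
        simp only [Finset.mem_coe, Finset.mem_filter, Finset.mem_univ, true_and] at hp
        simp only [Finset.mem_coe, Finset.mem_product, Finset.mem_filter, Finset.mem_univ, true_and, and_true]
        exact hp.1
      · intro p hp q hq hpq
        simp only [Finset.coe_filter, Finset.mem_univ, true_and, Set.mem_setOf_eq] at hp hq
        simp only [Prod.mk.injEq] at hpq
        have h2'' : p.2.1 = q.2.1 := by rw [hp.2, hq.2]
        exact Prod.ext hpq.1 (Prod.ext h2'' hpq.2)
    rw [Finset.card_product] at step
    have : (Finset.univ : Finset (Fin 3)).card = 3 := by simp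
    rw [this, hindegf] at step
    calc (Finset.univ.filter (fun p : V × V × Fin 3 => A p.1 s ∧ p.2.1 = s)).card
        ≤ indeg A s * 3 := step
      _ ≤ d * 3 := Nat.mul_le_mul_right 3 (hdeg s)
      _ = 3 * d := Nat.mul_comm d 3
  have hbi := Finset.card_biUnion_le_card_mul
      (Finset.univ.filter (fun s => Special A s))
      (fun s => Finset.univ.filter (fun p : V × V × Fin 3 => A p.1 s ∧ p.2.1 = s))
      (3 * d) hcardeach
  have hTle : T.ncard ≤ 3 * d * {v | Special A v}.ncard := by
    rw [hTf, hSpf]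
    calc (Finset.univ.filter (fun p : V × V × Fin 3 => A p.1 p.2.1 ∧ Special A p.2.1)).card
        ≤ ((Finset.univ.filter (fun s => Special A s)).biUnion
            (fun s => Finset.univ.filter (fun p : V × V × Fin 3 => A p.1 s ∧ p.2.1 = s))).card :=
          Finset.card_le_card hsub
      _ ≤ (Finset.univ.filter (fun s => Special A s)).card * (3 * d) := hbi
      _ = 3 * d * (Finset.univ.filter (fun s => Special A s)).card := Nat.mul_comm _ _
  exact hNT.trans hTle
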